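/- Under the SS-HOPM iteration with α > β(A), if A has finitely many real eigenvectors on the unit sphere, then the iterate sequence {x_k} converges to a single eigenvector x_*. -/

import Mathlib

noncomputable section
open scoped BigOperators
open Metric Filter
open scoped Topology

abbrev En (n : ℕ) := EuclideanSpace ℝ (Fin n)

def Symm {m n : ℕ} (A : (Fin m → Fin n) → ℝ) : Prop :=
  ∀ (p : Equiv.Perm (Fin m)) (i : Fin m → Fin n), A (i ∘ p) = A i

def tmul {m n : ℕ} (A : (Fin m → Fin n) → ℝ) (x : En n) : ℝ :=
  ∑ i : Fin m → Fin n, A i * ∏ k, x (i k)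

def tvec {m n : ℕ} (A : (Fin (m+1) → Fin n) → ℝ) (x : En n) : En n :=
  WithLp.toLp 2 (fun j => ∑ i : Fin m → Fin n, A (Fin.cons j i) * ∏ k, x (i k))

def tmat {m n : ℕ} (A : (Fin (m+2) → Fin n) → ℝ) (x : En n) : Matrix (Fin n) (Fin n) ℝ :=
  fun j k => ∑ i : Fin m → Fin n, A (Fin.cons j (Fin.cons k i)) * ∏ l, x (i l)

def quadForm {n : ℕ} (M : Matrix (Fin n) (Fin n) ℝ) (y : En n) : ℝ :=
  ∑ j, ∑ k, y j * M j k * y k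

def srad {n : ℕ} (M : Matrix (Fin n) (Fin n) ℝ) : ℝ :=
  ⨆ y : sphere (0 : En n) 1, |quadForm M (y : En n)|

def beta {m n : ℕ} (A : (Fin (m+2) → Fin n) → ℝ) : ℝ :=
  ((m:ℝ)+1) * ⨆ x : sphere (0 : En n) 1, srad (tmat A (x : En n))

-- multilinear form
def Bform {M n : ℕ} (A : (Fin M → Fin n) → ℝ) (z : Fin M → En n) : ℝ :=
  ∑ i : Fin M → Fin n, A i * ∏ k, z k (i k)

lemma Bform_perm {M n : ℕ} {A : (Fin M → Fin n) → ℝ} (hA : Symm A)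
    (σ : Equiv.Perm (Fin M)) (z : Fin M → En n) :
    Bform A (z ∘ σ) = Bform A z := by
  unfold Bform
  refine (Fintype.sum_bijective (fun i => i ∘ σ)
    ⟨fun a b hab => by
      funext k
      have := congrFun hab (σ.symm k)
      simpa using this,
     fun b => ⟨b ∘ σ.symm, by funext k; simp⟩⟩
    _ _ (fun i => ?_)).symm
  have h1 : A ((i ∘ ⇑σ) : Fin M → Fin n) = A i := hA σ i
  rw [h1]
  congr 1
  exact (Equiv.prod_comp σ (fun k => z k (i k))).symm

lemma sum_decomp1 {M n : ℕ} (f : (Fin (M+1) → Fin n) → ℝ) :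
    ∑ i : Fin (M+1) → Fin n, f i = ∑ j : Fin n, ∑ i : Fin M → Fin n, f (Fin.cons j i) := by
  rw [← (Fin.consEquiv (fun _ : Fin (M+1) => Fin n)).sum_comp f]
  rw [Fintype.sum_prod_type]
  rfl

lemma update_apply_pull {M n : ℕ} (z : Fin M → En n) (k : Fin M) (v : En n)
    (i : Fin M → Fin n) :
    (fun l => (Function.update z k v) l (i l)) =
      Function.update (fun l => z l (i l)) k (v (i k)) := by
  funext l
  by_cases h : l = k
  · subst h; simp
  · simp [Function.update_apply, h]

lemma Bform_update {M n : ℕ} (A : (Fin M → Fin n) → ℝ) (z : Fin M → En n)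
    (k : Fin M) (v : En n) :
    Bform A (Function.update z k v) =
      ∑ i : Fin M → Fin n, A i * ((∏ l ∈ Finset.univ.erase k, z l (i l)) * v (i k)) := by
  unfold Bform
  refine Finset.sum_congr rfl fun i _ => ?_
  rw [update_apply_pull]
  rw [Finset.prod_update_of_mem (Finset.mem_univ k)]
  rw [Finset.erase_eq]
  ring

lemma cons_eq_update {M : ℕ} {β : Type*} (u d : β) :
    (Fin.cons d (fun _ => u) : Fin (M+1) → β) = Function.update (fun _ => u) 0 d := by
  funext j
  refine Fin.cases ?_ (fun i => ?_) j
  · simp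
  · simp [Function.update_apply, Fin.succ_ne_zero]

lemma Bform_single_swap {M n : ℕ} {A : (Fin (M+1) → Fin n) → ℝ} (hA : Symm A)
    (u d : En n) (k : Fin (M+1)) :
    Bform A (Function.update (fun _ => u) k d) = Bform A (Fin.cons d (fun _ => u)) := by
  have key : (Function.update (fun _ => u) k d) ∘ (Equiv.swap (0:Fin (M+1)) k) =
      Fin.cons d (fun _ => u) := by
    funext j
    refine Fin.cases ?_ (fun i => ?_) j
    · show (Function.update (fun _ => u) k d) ((Equiv.swap (0:Fin (M+1)) k) 0) = d
      rw [Equiv.swap_apply_left, Function.update_self]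
    · show (Function.update (fun _ => u) k d) ((Equiv.swap (0:Fin (M+1)) k) i.succ) = _
      rw [Fin.cons_succ]
      by_cases h : i.succ = k
      · have hk0 : (0 : Fin (M+1)) ≠ k := fun hh => Fin.succ_ne_zero i (h.trans hh.symm)
        rw [h, Equiv.swap_apply_right, Function.update_apply, if_neg hk0]
      · rw [Equiv.swap_apply_of_ne_of_ne (Fin.succ_ne_zero i) h,
          Function.update_apply, if_neg h]
  rw [← key, Bform_perm hA]

lemma Bform_double_swap {M n : ℕ} {A : (Fin (M+2) → Fin n) → ℝ} (hA : Symm A)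
    (u d d' : En n) {k l : Fin (M+2)} (hkl : k ≠ l) :
    Bform A (Function.update (Function.update (fun _ => u) k d) l d') =
      Bform A (Fin.cons d (Fin.cons d' (fun _ => u))) := by
  obtain ⟨σ, hσ0, hσ1⟩ : ∃ σ : Equiv.Perm (Fin (M+2)), σ 0 = k ∧ σ 1 = l := by
    refine ⟨(Equiv.swap 1 ((Equiv.swap (0:Fin (M+2)) k) l)).trans (Equiv.swap 0 k), ?_, ?_⟩
    · have hl0 : (Equiv.swap (0:Fin (M+2)) k) l ≠ 0 := by
        intro h
        apply hkl
        have h2 := congrArg (Equiv.swap (0:Fin (M+2)) k) h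
        rw [Equiv.swap_apply_self, Equiv.swap_apply_left] at h2
        exact h2.symm
      have hρ0 : (Equiv.swap (1:Fin (M+2)) ((Equiv.swap (0:Fin (M+2)) k) l)) 0 = 0 :=
        Equiv.swap_apply_of_ne_of_ne (Fin.zero_ne_one) (fun h => hl0 h.symm)
      simp only [Equiv.trans_apply, hρ0, Equiv.swap_apply_left]
    · simp only [Equiv.trans_apply, Equiv.swap_apply_left, Equiv.swap_apply_self]
  have key : (Function.update (Function.update (fun _ => u) k d) l d') ∘ σ =
      Fin.cons d (Fin.cons d' (fun _ => u)) := by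
    funext j
    refine Fin.cases ?_ (fun i => ?_) j
    · show (Function.update (Function.update (fun _ => u) k d) l d') (σ 0) = d
      rw [hσ0, Function.update_apply, if_neg (fun h => hkl h), Function.update_self]
    · refine Fin.cases ?_ (fun i' => ?_) i
      · show (Function.update (Function.update (fun _ => u) k d) l d') (σ (Fin.succ 0)) = _
        rw [Fin.cons_succ, Fin.cons_zero, Fin.succ_zero_eq_one, hσ1, Function.update_self]
      · have hj2l : σ i'.succ.succ ≠ l := by
          rw [← hσ1]
          intro h
          have h2 := σ.injective h
          exact Fin.succ_ne_zero i' (Fin.succ_injective _ (h2.trans Fin.succ_zero_eq_one.symm))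
        have hj2k : σ i'.succ.succ ≠ k := by
          rw [← hσ0]
          intro h
          exact Fin.succ_ne_zero _ (σ.injective h)
        show (Function.update (Function.update (fun _ => u) k d) l d') (σ i'.succ.succ) = _
        rw [Function.update_apply, if_neg hj2l, Function.update_apply, if_neg hj2k,
          Fin.cons_succ, Fin.cons_succ]
  rw [← key, Bform_perm hA]

def dot {n : ℕ} (u v : En n) : ℝ := ∑ j, u j * v j

lemma dot_comm {n : ℕ} (u v : En n) : dot u v = dot v u := by
  unfold dot; exact Finset.sum_congr rfl fun j _ => mul_comm _ _

lemma dot_eq_inner {n : ℕ} (u v : En n) : dot u v = (inner ℝ u v : ℝ) := by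
  rw [PiLp.inner_apply]
  exact Finset.sum_congr rfl fun j _ => by simp [RCLike.inner_apply, mul_comm]

lemma dot_self_eq_norm_sq {n : ℕ} (v : En n) : dot v v = ‖v‖^2 := by
  rw [dot_eq_inner, real_inner_self_eq_norm_sq]

lemma norm_eq_sqrt_dot {n : ℕ} (v : En n) : ‖v‖ = Real.sqrt (dot v v) := by
  rw [dot_self_eq_norm_sq, Real.sqrt_sq (norm_nonneg v)]

lemma dot_add_right {n : ℕ} (u v w : En n) : dot u (v + w) = dot u v + dot u w := by
  unfold dot
  rw [← Finset.sum_add_distrib]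
  refine Finset.sum_congr rfl fun j _ => ?_
  have : (v + w) j = v j + w j := rfl
  rw [this]; ring

lemma dot_smul_right {n : ℕ} (c : ℝ) (u v : En n) : dot u (c • v) = c * dot u v := by
  unfold dot
  rw [Finset.mul_sum]
  refine Finset.sum_congr rfl fun j _ => ?_
  have : (c • v) j = c * v j := rfl
  rw [this]; ring

lemma dot_sub_left {n : ℕ} (u v w : En n) : dot (u - v) w = dot u w - dot v w := by
  unfold dot
  rw [← Finset.sum_sub_distrib]
  refine Finset.sum_congr rfl fun j _ => ?_
  have : (u - v) j = u j - v j := rfl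
  rw [this]; ring

-- Bform with one cons
lemma Bform_cons {m n : ℕ} (A : (Fin (m+2) → Fin n) → ℝ) (a u : En n) :
    Bform A (Fin.cons a (fun _ => u)) = dot a (tvec A u) := by
  unfold Bform dot tvec
  rw [sum_decomp1]
  refine Finset.sum_congr rfl fun j _ => ?_
  rw [Finset.mul_sum]
  refine Finset.sum_congr rfl fun i _ => ?_
  rw [Fin.prod_univ_succ]
  show A (Fin.cons j i) * (a j * ∏ x : Fin (m+1), u (i x)) = _
  ring

-- Bform with two cons
lemma Bform_cons_cons {m n : ℕ} (A : (Fin (m+2) → Fin n) → ℝ) (a b u : En n) :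
    Bform A (Fin.cons a (Fin.cons b (fun _ => u))) = ∑ j, ∑ k, a j * tmat A u j k * b k := by
  unfold Bform tmat
  rw [sum_decomp1]
  refine Finset.sum_congr rfl fun j _ => ?_
  rw [sum_decomp1]
  refine Finset.sum_congr rfl fun k _ => ?_
  rw [Finset.mul_sum, Finset.sum_mul]
  refine Finset.sum_congr rfl fun i _ => ?_
  rw [Fin.prod_univ_succ, Fin.prod_univ_succ]
  show A (Fin.cons j (Fin.cons k i)) * (a j * (b k * ∏ x : Fin m, u (i x))) = _
  ring

lemma cons_cons_self {m n : ℕ} (u : En n) :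
    (Fin.cons u (Fin.cons u (fun _ => u)) : Fin (m+2) → En n) = fun _ => u := by
  funext j
  refine Fin.cases rfl (fun i => ?_) j
  rw [Fin.cons_succ]
  exact Fin.cases rfl (fun i' => by rw [Fin.cons_succ]) i

lemma cons_self {m n : ℕ} (u : En n) :
    (Fin.cons u (fun _ => u) : Fin (m+2) → En n) = fun _ => u := by
  funext j; exact Fin.cases rfl (fun i => by rw [Fin.cons_succ]) j

lemma Bform_const {m n : ℕ} (A : (Fin (m+2) → Fin n) → ℝ) (u : En n) :
    Bform A (fun _ => u) = tmul A u := rfl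

lemma quadForm_eq_Bform {m n : ℕ} (A : (Fin (m+2) → Fin n) → ℝ) (u d : En n) :
    quadForm (tmat A u) d = Bform A (Fin.cons d (Fin.cons d (fun _ => u))) :=
  (Bform_cons_cons A d d u).symm

lemma tmul_eq_quadForm {m n : ℕ} (A : (Fin (m+2) → Fin n) → ℝ) (u : En n) :
    tmul A u = quadForm (tmat A u) u := by
  rw [quadForm_eq_Bform, cons_cons_self, Bform_const]

lemma dot_tvec_eq_quadForm {m n : ℕ} (A : (Fin (m+2) → Fin n) → ℝ) (u : En n) :
    dot u (tvec A u) = quadForm (tmat A u) u := by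
  rw [← Bform_cons, quadForm_eq_Bform, cons_cons_self, cons_self]

lemma hasDerivAt_Bform {M n : ℕ} (A : (Fin M → Fin n) → ℝ) (c e : Fin M → En n) (t : ℝ) :
    HasDerivAt (fun s => Bform A (fun l => c l + s • e l))
      (∑ k, Bform A (Function.update (fun l => c l + t • e l) k (e k))) t := by
  have key : ∀ i ∈ (Finset.univ : Finset (Fin M → Fin n)),
      HasDerivAt (fun s => A i * ∏ l, (c l (i l) + s * e l (i l)))
        (A i * ∑ l, (∏ j ∈ Finset.univ.erase l, (c j (i j) + t * e j (i j))) • (e l (i l)))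
        t := by
    intro i _
    exact (HasDerivAt.fun_finsetProd
      (fun l _ => ((hasDerivAt_mul_const (e l (i l))).const_add (c l (i l))))).const_mul (A i)
  have h := HasDerivAt.fun_sum key
  have hfun : (fun s => ∑ i : Fin M → Fin n, A i * ∏ l, (c l (i l) + s * e l (i l)))
      = fun s => Bform A (fun l => c l + s • e l) := rfl
  rw [hfun] at h
  convert h using 1
  · rfl
  · rfl
  calc ∑ k, Bform A (Function.update (fun l => c l + t • e l) k (e k))
      = ∑ k, ∑ i : Fin M → Fin n,
          A i * ((∏ l ∈ Finset.univ.erase k, (c l (i l) + t * e l (i l))) * e k (i k)) :=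
        Finset.sum_congr rfl fun k _ => Bform_update A _ k (e k)
    _ = ∑ i : Fin M → Fin n, ∑ k,
          A i * ((∏ l ∈ Finset.univ.erase k, (c l (i l) + t * e l (i l))) * e k (i k)) :=
        Finset.sum_comm
    _ = _ := by
        refine Finset.sum_congr rfl fun i _ => ?_
        rw [Finset.mul_sum]
        exact Finset.sum_congr rfl fun k _ => by rw [smul_eq_mul]

lemma Bform_update_zero {M n : ℕ} (A : (Fin M → Fin n) → ℝ) (z : Fin M → En n) (k : Fin M) :
    Bform A (Function.update z k (0 : En n)) = 0 := by
  rw [Bform_update]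
  refine Finset.sum_eq_zero fun i _ => ?_
  have : (0 : En n) (i k) = 0 := rfl
  rw [this]; ring

lemma quadForm_smul_matrix {n : ℕ} (cc : ℝ) (M : Matrix (Fin n) (Fin n) ℝ) (y : En n) :
    quadForm (cc • M) y = cc * quadForm M y := by
  unfold quadForm
  rw [Finset.mul_sum]
  refine Finset.sum_congr rfl fun j _ => ?_
  rw [Finset.mul_sum]
  refine Finset.sum_congr rfl fun k _ => ?_
  rw [Matrix.smul_apply, smul_eq_mul]; ring

lemma quadForm_smul_vec {n : ℕ} (cc : ℝ) (M : Matrix (Fin n) (Fin n) ℝ) (y : En n) :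
    quadForm M (cc • y) = cc^2 * quadForm M y := by
  unfold quadForm
  rw [Finset.mul_sum]
  refine Finset.sum_congr rfl fun j _ => ?_
  rw [Finset.mul_sum]
  refine Finset.sum_congr rfl fun k _ => ?_
  have h1 : (cc • y) j = cc * y j := rfl
  have h2 : (cc • y) k = cc * y k := rfl
  rw [h1, h2]; ring

lemma tmat_smul {m n : ℕ} (A : (Fin (m+2) → Fin n) → ℝ) (cc : ℝ) (u : En n) :
    tmat A (cc • u) = cc^m • tmat A u := by
  funext j k
  show (∑ i : Fin m → Fin n, A (Fin.cons j (Fin.cons k i)) * ∏ l, (cc • u) (i l)) = _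
  rw [Matrix.smul_apply, smul_eq_mul]
  unfold tmat
  rw [Finset.mul_sum]
  refine Finset.sum_congr rfl fun i _ => ?_
  have : ∀ l, (cc • u) (i l) = cc * u (i l) := fun _ => rfl
  calc A (Fin.cons j (Fin.cons k i)) * ∏ l, (cc • u) (i l)
      = A (Fin.cons j (Fin.cons k i)) * ∏ l, (cc * u (i l)) := by
        rw [Finset.prod_congr rfl fun l _ => this l]
    _ = _ := by
        rw [Finset.prod_mul_distrib, Finset.prod_const, Finset.card_univ, Fintype.card_fin]
        ring

lemma quadForm_zero_vec {n : ℕ} (M : Matrix (Fin n) (Fin n) ℝ) :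
    quadForm M (0 : En n) = 0 := by
  unfold quadForm
  refine Finset.sum_eq_zero fun j _ => Finset.sum_eq_zero fun k _ => ?_
  have : (0 : En n) j = 0 := rfl
  rw [this]; ring

lemma quadForm_tmat_bound {m n : ℕ} (A : (Fin (m+2) → Fin n) → ℝ) (S : ℝ) (hS0 : 0 ≤ S)
    (hS : ∀ z y : En n, ‖z‖ = 1 → ‖y‖ = 1 → |quadForm (tmat A z) y| ≤ S)
    (e : En n) (he : ‖e‖ = 1) (u y : En n) :
    |quadForm (tmat A u) y| ≤ S * ‖u‖^m * ‖y‖^2 := by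
  -- reduce y
  rcases eq_or_ne y 0 with hy | hy
  · rw [hy, quadForm_zero_vec]
    simp only [abs_zero]
    positivity
  rcases eq_or_ne u 0 with hu | hu
  · rcases Nat.eq_zero_or_pos m with hm | hm
    · -- m = 0 : tmat independent of u
      subst hm
      have heq : tmat A u = tmat A e := by
        funext j k
        unfold tmat
        refine Finset.sum_congr rfl fun i _ => ?_
        rw [Finset.univ_eq_empty, Finset.prod_empty, Finset.prod_empty]
      rw [heq]
      have hyu : y = ‖y‖ • (‖y‖⁻¹ • y) := by
        rw [smul_smul, mul_inv_cancel₀ (norm_ne_zero_iff.mpr hy), one_smul]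
      have h2 : quadForm (tmat A e) y = ‖y‖^2 * quadForm (tmat A e) (‖y‖⁻¹ • y) := by
        conv_lhs => rw [hyu]
        rw [quadForm_smul_vec]
      have hyn : ‖(‖y‖⁻¹ • y)‖ = 1 := by
        rw [norm_smul, norm_inv, norm_norm, inv_mul_cancel₀ (norm_ne_zero_iff.mpr hy)]
      have hb := hS e (‖y‖⁻¹ • y) he hyn
      rw [h2, abs_mul, abs_pow, abs_norm]
      calc ‖y‖^2 * |quadForm (tmat A e) (‖y‖⁻¹ • y)| ≤ ‖y‖^2 * S :=
            mul_le_mul_of_nonneg_left hb (by positivity)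
        _ = S * ‖u‖^0 * ‖y‖^2 := by rw [pow_zero]; ring
    · -- m ≥ 1 : tmat A 0 = 0
      subst hu
      have heq : tmat A (0 : En n) = 0 := by
        funext j k
        unfold tmat
        refine Finset.sum_eq_zero fun i _ => ?_
        have : (0 : En n) (i ⟨0, hm⟩) = 0 := rfl
        rw [Finset.prod_eq_zero (Finset.mem_univ (⟨0, hm⟩ : Fin m)) this]
        ring
      rw [heq]
      have : quadForm (0 : Matrix (Fin n) (Fin n) ℝ) y = 0 := by
        unfold quadForm
        refine Finset.sum_eq_zero fun j _ => Finset.sum_eq_zero fun k _ => ?_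
        rw [Matrix.zero_apply]; ring
      rw [this, abs_zero]
      positivity
  · -- main case
    have hun : ‖(‖u‖⁻¹ • u)‖ = 1 := by
      rw [norm_smul, norm_inv, norm_norm, inv_mul_cancel₀ (norm_ne_zero_iff.mpr hu)]
    have hyn : ‖(‖y‖⁻¹ • y)‖ = 1 := by
      rw [norm_smul, norm_inv, norm_norm, inv_mul_cancel₀ (norm_ne_zero_iff.mpr hy)]
    have hueq : u = ‖u‖ • (‖u‖⁻¹ • u) := by
      rw [smul_smul, mul_inv_cancel₀ (norm_ne_zero_iff.mpr hu), one_smul]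
    have hyeq : y = ‖y‖ • (‖y‖⁻¹ • y) := by
      rw [smul_smul, mul_inv_cancel₀ (norm_ne_zero_iff.mpr hy), one_smul]
    calc |quadForm (tmat A u) y|
        = |quadForm (tmat A (‖u‖ • (‖u‖⁻¹ • u))) (‖y‖ • (‖y‖⁻¹ • y))| := by
          rw [← hueq, ← hyeq]
      _ = ‖u‖^m * ‖y‖^2 * |quadForm (tmat A (‖u‖⁻¹ • u)) (‖y‖⁻¹ • y)| := by
          rw [tmat_smul, quadForm_smul_matrix, quadForm_smul_vec, abs_mul, abs_mul,
            abs_pow, abs_pow, abs_norm, abs_norm]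
          ring
      _ ≤ ‖u‖^m * ‖y‖^2 * S := by
          exact mul_le_mul_of_nonneg_left (hS _ _ hun hyn) (by positivity)
      _ = S * ‖u‖^m * ‖y‖^2 := by ring

lemma dot_nonneg_self {n : ℕ} (v : En n) : 0 ≤ dot v v := by
  rw [dot_self_eq_norm_sq]; positivity

lemma hasDerivAt_tmul {m n : ℕ} (A : (Fin (m+2) → Fin n) → ℝ) (hA : Symm A)
    (x d : En n) (t : ℝ) :
    HasDerivAt (fun s : ℝ => tmul A (x + s • d))
      (((m:ℝ)+2) * Bform A (Fin.cons d (fun _ => x + t • d))) t := by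
  have h := hasDerivAt_Bform A (fun _ : Fin (m+2) => x) (fun _ : Fin (m+2) => d) t
  have hfun : (fun s : ℝ => Bform A (fun l : Fin (m+2) =>
      (fun _ : Fin (m+2) => x) l + s • (fun _ : Fin (m+2) => d) l))
      = (fun s : ℝ => tmul A (x + s • d)) := rfl
  rw [hfun] at h
  convert h using 1
  have hup : ∀ k : Fin (m+2), Bform A (Function.update
      (fun l : Fin (m+2) => (fun _ : Fin (m+2) => x) l + t • (fun _ : Fin (m+2) => d) l)
      k ((fun _ : Fin (m+2) => d) k)) = Bform A (Fin.cons d (fun _ => x + t • d)) :=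
    fun k => Bform_single_swap hA (x + t • d) d k
  rw [Finset.sum_congr rfl (fun k _ => hup k), Finset.sum_const, Finset.card_univ,
    Fintype.card_fin, nsmul_eq_mul]
  push_cast
  ring

lemma hasDerivAt_Bform_cons {m n : ℕ} (A : (Fin (m+2) → Fin n) → ℝ) (hA : Symm A)
    (x d : En n) (t : ℝ) :
    HasDerivAt (fun s : ℝ => Bform A (Fin.cons d (fun _ => x + s • d)))
      (((m:ℝ)+1) * quadForm (tmat A (x + t • d)) d) t := by
  have h := hasDerivAt_Bform A (Fin.cons d (fun _ => x)) (Fin.cons (0:En n) (fun _ => d)) t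
  have hfeq : (fun s : ℝ => Bform A (fun l => (Fin.cons d (fun _ => x) : Fin (m+2) → En n) l
        + s • (Fin.cons (0:En n) (fun _ => d) : Fin (m+2) → En n) l))
      = fun s : ℝ => Bform A (Fin.cons d (fun _ => x + s • d)) := by
    funext s
    congr 1
    funext l
    refine Fin.cases ?_ (fun i => ?_) l
    · show d + s • (0:En n) = d
      rw [smul_zero, add_zero]
    · rfl
  rw [hfeq] at h
  convert h using 1
  have hbase : (fun l => (Fin.cons d (fun _ => x) : Fin (m+2) → En n) l
      + t • (Fin.cons (0:En n) (fun _ => d) : Fin (m+2) → En n) l)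
      = Function.update (fun _ : Fin (m+2) => x + t • d) 0 d := by
    funext l
    refine Fin.cases ?_ (fun i => ?_) l
    · show d + t • (0:En n) = _
      rw [smul_zero, add_zero, Function.update_self]
    · show x + t • d = _
      rw [Function.update_apply, if_neg (Fin.succ_ne_zero i)]
  rw [hbase, Fin.sum_univ_succ]
  have h0 : Function.update (Function.update (fun _ : Fin (m+2) => x + t • d) 0 d) 0
      ((Fin.cons (0:En n) (fun _ => d) : Fin (m+2) → En n) 0)
      = Function.update (fun _ : Fin (m+2) => x + t • d) 0 (0:En n) := by
    rw [show ((Fin.cons (0:En n) (fun _ => d) : Fin (m+2) → En n) 0) = (0:En n) from rfl,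
      Function.update_idem]
  rw [h0, Bform_update_zero, zero_add]
  have hsucc : ∀ i : Fin (m+1), Bform A (Function.update
      (Function.update (fun _ : Fin (m+2) => x + t • d) 0 d) i.succ
      ((Fin.cons (0:En n) (fun _ => d) : Fin (m+2) → En n) i.succ))
      = quadForm (tmat A (x + t • d)) d := by
    intro i
    rw [show ((Fin.cons (0:En n) (fun _ => d) : Fin (m+2) → En n) i.succ) = d from rfl]
    have hcu : (Fin.cons d (fun _ : Fin (m+1) => x + t • d) : Fin (m+2) → En n)
        = Function.update (fun _ : Fin (m+2) => x + t • d) 0 d := cons_eq_update _ _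
    rw [← hcu, show (Function.update (Fin.cons d (fun _ : Fin (m+1) => x + t • d)
        : Fin (m+2) → En n) i.succ d) = Function.update (Function.update
        (fun _ : Fin (m+2) => x + t • d) 0 d) i.succ d from by rw [hcu]]
    rw [Bform_double_swap hA (x + t • d) d d (Fin.succ_ne_zero i).symm]
    exact (quadForm_eq_Bform A (x + t • d) d).symm
  rw [Finset.sum_congr rfl (fun i _ => hsucc i), Finset.sum_const, Finset.card_univ,
    Fintype.card_fin, nsmul_eq_mul]
  push_cast
  ring

set_option maxHeartbeats 1000000 in
lemma grad_ineq {m n : ℕ} {A : (Fin (m+2) → Fin n) → ℝ} (hA : Symm A) (S α : ℝ)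
    (hS0 : 0 ≤ S)
    (hbound : ∀ u y : En n, |quadForm (tmat A u) y| ≤ S * ‖u‖^m * ‖y‖^2)
    (hα : ((m:ℝ)+1) * S < α)
    (x y : En n) (hx : ‖x‖ = 1) (hy : ‖y‖ = 1) (hxy : y ≠ -x) :
    tmul A y - tmul A x ≥ ((m:ℝ)+2) * dot (y - x) (tvec A x + α • x) := by
  have hm1 : (0:ℝ) ≤ (m:ℝ)+1 := by positivity
  have hα0 : 0 < α := lt_of_le_of_lt (by nlinarith) hα
  set d := y - x with hd
  -- the segment line never passes through 0
  have hu0 : ∀ t : ℝ, x + t • d ≠ 0 := by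
    intro t h
    apply hxy
    rw [hd] at h
    have h1 : (1 - t) • x + t • y = 0 := by
      linear_combination (norm := module) h
    have h2 : (1 - t) • x = -(t • y) := by
      linear_combination (norm := module) h1
    have h3 : |1 - t| = |t| := by
      have h4 := congrArg norm h2
      rwa [norm_neg, norm_smul, norm_smul, hx, hy, mul_one, mul_one,
        Real.norm_eq_abs, Real.norm_eq_abs] at h4
    have ht : t = 1/2 := by
      rcases abs_eq_abs.mp h3 with h4 | h4 <;> linarith
    rw [ht] at h1
    linear_combination (norm := module) (2:ℝ) • h1
  set a1 := dot x d with ha1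
  set a2 := dot d d with ha2
  have ha2nn : 0 ≤ a2 := dot_nonneg_self d
  set q : ℝ → ℝ := fun t => 1 + (2*a1*t + a2*t^2) with hqdef
  set w : ℝ → ℝ := fun t => a1 + a2*t with hwdef
  have hdotxx : dot x x = 1 := by rw [dot_self_eq_norm_sq, hx, one_pow]
  have hdotu : ∀ t : ℝ, ∀ v : En n, dot (x + t • d) v = dot x v + t * dot d v := by
    intro t v
    rw [dot_comm, dot_add_right, dot_smul_right, dot_comm v x, dot_comm v d]
  have hqnorm : ∀ t, q t = ‖x + t • d‖^2 := by
    intro t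
    rw [← dot_self_eq_norm_sq, hdotu, dot_add_right, dot_smul_right, dot_add_right,
      dot_smul_right, hdotxx, dot_comm d x, ← ha1]
    show 1 + (2*a1*t + a2*t^2) = _
    ring
  have hwu : ∀ t, w t = dot (x + t • d) d := by
    intro t
    rw [hdotu]
    show a1 + a2*t = _
    ring
  have hq0 : ∀ t, 0 < q t := fun t => by
    rw [hqnorm]
    exact pow_pos (norm_pos_iff.mpr (hu0 t)) 2
  set s : ℝ → ℝ := fun t => Real.sqrt (q t) with hsdef
  have hsnorm : ∀ t, s t = ‖x + t • d‖ := fun t => by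
    show Real.sqrt (q t) = _
    rw [hqnorm, Real.sqrt_sq (norm_nonneg _)]
  have hs0 : ∀ t, 0 < s t := fun t => by
    rw [hsnorm]; exact norm_pos_iff.mpr (hu0 t)
  have hq' : ∀ t, HasDerivAt q (2 * w t) t := by
    intro t
    have hA1 : HasDerivAt (fun t:ℝ => 2*a1*t) (2*a1) t := by
      simpa using (hasDerivAt_id t).const_mul (2*a1)
    have hA2 : HasDerivAt (fun t:ℝ => a2*t^2) (a2*(2*t)) t := by
      simpa using (hasDerivAt_pow 2 t).const_mul a2
    have h1 := (hA1.add hA2).const_add 1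
    have h2 : HasDerivAt q (2*a1 + a2*(2*t)) t := h1
    convert h2 using 1
    show 2 * (a1 + a2*t) = _
    ring
  have hs' : ∀ t, HasDerivAt s (w t / s t) t := by
    intro t
    have h := (Real.hasDerivAt_sqrt (ne_of_gt (hq0 t))).comp t (hq' t)
    have h2 : HasDerivAt s (1 / (2 * Real.sqrt (q t)) * (2 * w t)) t := h
    convert h2 using 1
    have hst := (hs0 t).ne'
    show w t / s t = _
    rw [hsdef]
    field_simp
  -- F and its first derivative
  set F : ℝ → ℝ := fun t => tmul A (x + t • d) with hFdef
  set F1 : ℝ → ℝ := fun t => ((m:ℝ)+2) * Bform A (Fin.cons d (fun _ => x + t • d)) with hF1def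
  have hF' : ∀ t, HasDerivAt F (F1 t) t := fun t => hasDerivAt_tmul A hA x d t
  have hF1' : ∀ t, HasDerivAt F1
      (((m:ℝ)+2) * (((m:ℝ)+1) * quadForm (tmat A (x + t • d)) d)) t := fun t =>
    (hasDerivAt_Bform_cons A hA x d t).const_mul ((m:ℝ)+2)
  -- N and its derivatives
  set N : ℝ → ℝ := fun t => s t ^ (m+2) with hNdef
  set N1 : ℝ → ℝ := fun t => ((m:ℝ)+2) * (s t ^ m * w t) with hN1def
  have hN' : ∀ t, HasDerivAt N (N1 t) t := by
    intro t
    have h := (hs' t).pow (m+2)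
    have h2 : HasDerivAt N (((m+2 : ℕ):ℝ) * s t ^ (m+1) * (w t / s t)) t := h
    convert h2 using 1
    have hst := (hs0 t).ne'
    show ((m:ℝ)+2) * (s t ^ m * w t) = _
    rw [pow_succ]
    push_cast
    field_simp
  have hN1' : ∀ t, HasDerivAt N1
      (((m:ℝ)+2) * ((m:ℝ) * s t ^ (m-1) * (w t / s t) * w t + s t ^ m * a2)) t := by
    intro t
    have hsp : HasDerivAt (fun t => s t ^ m) ((m:ℝ) * s t ^ (m-1) * (w t / s t)) t :=
      (hs' t).pow m
    have hw' : HasDerivAt w a2 t := by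
      have : HasDerivAt (fun t:ℝ => a1 + a2*t) a2 t := by
        simpa using ((hasDerivAt_id t).const_mul a2).const_add a1
      exact this
    exact (hsp.mul hw').const_mul ((m:ℝ)+2)
  -- the derivative of P := F1 + α * N1 is nonnegative
  set P : ℝ → ℝ := fun t => F1 t + α * N1 t with hPdef
  have hP' : ∀ t, HasDerivAt P
      ((((m:ℝ)+2) * (((m:ℝ)+1) * quadForm (tmat A (x + t • d)) d))
        + α * (((m:ℝ)+2) * ((m:ℝ) * s t ^ (m-1) * (w t / s t) * w t + s t ^ m * a2))) t :=
    fun t => (hF1' t).add ((hN1' t).const_mul α)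
  have hPd : Differentiable ℝ P := fun t => (hP' t).differentiableAt
  have hPmono : Monotone P := by
    apply monotone_of_deriv_nonneg hPd
    intro t
    rw [(hP' t).deriv]
    have hquad : -(S * (s t ^ m * a2)) ≤ quadForm (tmat A (x + t • d)) d := by
      have h1 := hbound (x + t • d) d
      have h2 : S * ‖x + t • d‖^m * ‖d‖^2 = S * (s t ^ m * a2) := by
        rw [hsnorm, ha2, dot_self_eq_norm_sq]; ring
      have h3 := neg_abs_le (quadForm (tmat A (x + t • d)) d)
      rw [h2] at h1
      linarith
    have hsm : 0 ≤ s t ^ m := pow_nonneg (hs0 t).le m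
    have hterm : 0 ≤ (m:ℝ) * s t ^ (m-1) * (w t / s t) * w t := by
      have heq : (m:ℝ) * s t ^ (m-1) * (w t / s t) * w t
          = (m:ℝ) * s t ^ (m-1) * (w t^2 / s t) := by ring
      rw [heq]
      have h1 := (hs0 t).le
      have h2 : 0 ≤ s t ^ (m-1) := pow_nonneg h1 _
      have h3 : 0 ≤ w t ^ 2 / s t := div_nonneg (sq_nonneg _) h1
      positivity
    have hmain : ((m:ℝ)+1) * (S * (s t ^ m * a2)) ≤ α * (s t ^ m * a2) :=
      mul_le_mul_of_nonneg_right hα.le (mul_nonneg hsm ha2nn) |>.trans_eq' (by ring)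
    nlinarith [mul_nonneg hα0.le hterm, mul_nonneg hsm ha2nn,
      mul_le_mul_of_nonneg_left hquad hm1]
  -- mean value theorem on [0,1]
  set G : ℝ → ℝ := fun t => F t + α * N t with hGdef
  have hG' : ∀ t, HasDerivAt G (P t) t := fun t => (hF' t).add ((hN' t).const_mul α)
  have hGd : Differentiable ℝ G := fun t => (hG' t).differentiableAt
  obtain ⟨c, hc, hceq⟩ := exists_hasDerivAt_eq_slope G P one_pos
    (hGd.continuous.continuousOn) (fun t _ => hG' t)
  have hc0 : P 0 ≤ P c := hPmono hc.1.le
  -- endpoint values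
  have hu1 : x + (1:ℝ) • d = y := by rw [one_smul, hd]; abel
  have hu00 : x + (0:ℝ) • d = x := by rw [zero_smul, add_zero]
  have hG1 : G 1 = tmul A y + α := by
    show F 1 + α * N 1 = _
    have h1 : F 1 = tmul A y := by
      show tmul A (x + (1:ℝ) • d) = _
      rw [hu1]
    have h2 : N 1 = 1 := by
      show s 1 ^ (m+2) = 1
      rw [hsnorm, hu1, hy, one_pow]
    rw [h1, h2, mul_one]
  have hG0 : G 0 = tmul A x + α := by
    show F 0 + α * N 0 = _
    have h1 : F 0 = tmul A x := by
      show tmul A (x + (0:ℝ) • d) = _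
      rw [hu00]
    have h2 : N 0 = 1 := by
      show s 0 ^ (m+2) = 1
      rw [hsnorm, hu00, hx, one_pow]
    rw [h1, h2, mul_one]
  have hP0 : P 0 = ((m:ℝ)+2) * (dot d (tvec A x) + α * dot x d) := by
    show F1 0 + α * N1 0 = _
    have h1 : F1 0 = ((m:ℝ)+2) * dot d (tvec A x) := by
      show ((m:ℝ)+2) * Bform A (Fin.cons d (fun _ => x + (0:ℝ) • d)) = _
      rw [show (fun _ : Fin (m+1) => x + (0:ℝ) • d) = fun _ : Fin (m+1) => x from
        funext fun _ => hu00, Bform_cons]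
    have h2 : N1 0 = ((m:ℝ)+2) * dot x d := by
      show ((m:ℝ)+2) * (s 0 ^ m * w 0) = _
      rw [hsnorm, hu00, hx, one_pow, hwu, hu00]
      ring
    rw [h1, h2]
    ring
  have hdot : dot d (tvec A x + α • x) = dot d (tvec A x) + α * dot x d := by
    rw [dot_add_right, dot_smul_right, dot_comm d x]
  have hfinal : ((m:ℝ)+2) * dot d (tvec A x + α • x) ≤ tmul A y - tmul A x := by
    calc ((m:ℝ)+2) * dot d (tvec A x + α • x) = P 0 := by rw [hP0, hdot]
      _ ≤ P c := hc0
      _ = (G 1 - G 0) / (1 - 0) := hceq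
      _ = tmul A y - tmul A x := by rw [hG1, hG0]; ring
  exact hfinal

lemma abs_coord_le_norm {n : ℕ} (v : En n) (j : Fin n) : |v j| ≤ ‖v‖ := by
  rw [EuclideanSpace.norm_eq, ← Real.sqrt_sq_eq_abs]
  apply Real.sqrt_le_sqrt
  have : (v j)^2 = ‖v j‖^2 := by rw [Real.norm_eq_abs, sq_abs]
  rw [this]
  exact Finset.single_le_sum (fun i _ => sq_nonneg ‖v i‖) (Finset.mem_univ j)

lemma continuous_tvec {m n : ℕ} (A : (Fin (m+1) → Fin n) → ℝ) :
    Continuous (fun z : En n => tvec A z) := by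
  unfold tvec
  exact (PiLp.continuous_toLp 2 _).comp (continuous_pi fun j => continuous_finset_sum _ fun i _ =>
    continuous_const.mul (continuous_finset_prod _ fun k _ => PiLp.continuous_apply 2 _ (i k)))

lemma quadForm_abs_le {n : ℕ} (M : Matrix (Fin n) (Fin n) ℝ) (y : En n) (hy : ‖y‖ = 1) :
    |quadForm M y| ≤ ∑ j, ∑ k, |M j k| := by
  unfold quadForm
  refine (Finset.abs_sum_le_sum_abs _ _).trans ?_
  refine Finset.sum_le_sum fun j _ => ?_
  refine (Finset.abs_sum_le_sum_abs _ _).trans ?_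
  refine Finset.sum_le_sum fun k _ => ?_
  rw [abs_mul, abs_mul]
  have h1 : |y j| ≤ 1 := by rw [← hy]; exact abs_coord_le_norm y j
  have h2 : |y k| ≤ 1 := by rw [← hy]; exact abs_coord_le_norm y k
  calc |y j| * |M j k| * |y k| ≤ 1 * |M j k| * 1 := by
        apply mul_le_mul (mul_le_mul h1 le_rfl (abs_nonneg _) one_pos.le) h2 (abs_nonneg _)
        positivity
    _ = |M j k| := by ring

lemma tmat_abs_sum_le {m n : ℕ} (A : (Fin (m+2) → Fin n) → ℝ) (z : En n) (hz : ‖z‖ = 1) :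
    ∑ j, ∑ k, |tmat A z j k| ≤ ∑ i : Fin (m+2) → Fin n, |A i| := by
  have hsum : ∑ i : Fin (m+2) → Fin n, |A i|
      = ∑ j : Fin n, ∑ k : Fin n, ∑ i : Fin m → Fin n, |A (Fin.cons j (Fin.cons k i))| := by
    rw [sum_decomp1 (fun i => |A i|)]
    exact Finset.sum_congr rfl fun j _ => sum_decomp1 (fun i => |A (Fin.cons j i)|)
  rw [hsum]
  refine Finset.sum_le_sum fun j _ => Finset.sum_le_sum fun k _ => ?_
  unfold tmat
  refine (Finset.abs_sum_le_sum_abs _ _).trans ?_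
  refine Finset.sum_le_sum fun i _ => ?_
  rw [abs_mul]
  have hp : |∏ l, z (i l)| ≤ 1 := by
    rw [Finset.abs_prod]
    refine Finset.prod_le_one (fun l _ => abs_nonneg _) (fun l _ => ?_)
    rw [← hz]; exact abs_coord_le_norm z (i l)
  calc |A (Fin.cons j (Fin.cons k i))| * |∏ l, z (i l)|
      ≤ |A (Fin.cons j (Fin.cons k i))| * 1 :=
        mul_le_mul_of_nonneg_left hp (abs_nonneg _)
    _ = _ := mul_one _

lemma dot_sub_right {n : ℕ} (u v w : En n) : dot u (v - w) = dot u v - dot u w := by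
  rw [dot_comm, dot_sub_left, dot_comm v u, dot_comm w u]


set_option maxHeartbeats 1000000 in
/-- SS-HOPM with α > β(A): if A has finitely many unit eigenvectors, the iterates
converge to a single eigenvector. -/
theorem stmt14 {m n : ℕ} (A : (Fin (m+2) → Fin n) → ℝ) (hA : Symm A)
    (α : ℝ) (hα : α > beta A)
    (x : ℕ → En n) (hx0 : ‖x 0‖ = 1)
    (hiter : ∀ k, x (k+1) = ‖tvec A (x k) + α • x k‖⁻¹ • (tvec A (x k) + α • x k))
    (hfin : {y : En n | ‖y‖ = 1 ∧ ∃ lam : ℝ, tvec A y = lam • y}.Finite) :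
    ∃ xstar : En n, Tendsto x atTop (nhds xstar) ∧ ‖xstar‖ = 1 ∧
      ∃ lam : ℝ, tvec A xstar = lam • xstar := by
  classical
  -- n ≥ 1
  rcases Nat.eq_zero_or_pos n with hn0 | hn
  · exfalso
    subst hn0
    have h0 : ‖x 0‖ = 0 := by
      rw [EuclideanSpace.norm_eq]
      simp
    rw [hx0] at h0
    exact one_ne_zero h0
  -- unit vector e
  set e : En n := EuclideanSpace.single ⟨0, hn⟩ (1:ℝ) with hedef
  have he : ‖e‖ = 1 := by
    rw [hedef, EuclideanSpace.norm_single, norm_one]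
  haveI hsne : Nonempty (sphere (0 : En n) 1) :=
    ⟨⟨e, mem_sphere_zero_iff_norm.mpr he⟩⟩
  -- the sup S
  set Su : ℝ := ⨆ z : sphere (0 : En n) 1, srad (tmat A (z : En n)) with hSudef
  set K : ℝ := ∑ i : Fin (m+2) → Fin n, |A i| with hKdef
  have hbdd1 : ∀ M : Matrix (Fin n) (Fin n) ℝ,
      BddAbove (Set.range fun y : sphere (0 : En n) 1 => |quadForm M (y : En n)|) := by
    intro M
    refine ⟨∑ j, ∑ k, |M j k|, ?_⟩
    rintro r ⟨y, rfl⟩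
    exact quadForm_abs_le M y (mem_sphere_zero_iff_norm.mp y.2)
  have hquad_le_srad : ∀ (M : Matrix (Fin n) (Fin n) ℝ) (y : En n), ‖y‖ = 1 →
      |quadForm M y| ≤ srad M := by
    intro M y hy
    exact le_ciSup (hbdd1 M) (⟨y, mem_sphere_zero_iff_norm.mpr hy⟩ : sphere (0 : En n) 1)
  have hsrad_le_K : ∀ z : En n, ‖z‖ = 1 → srad (tmat A z) ≤ K := by
    intro z hz
    refine ciSup_le fun y => ?_
    refine (quadForm_abs_le _ _ (mem_sphere_zero_iff_norm.mp y.2)).trans ?_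
    exact tmat_abs_sum_le A z hz
  have hbdd2 : BddAbove (Set.range fun z : sphere (0 : En n) 1 => srad (tmat A (z : En n))) := by
    refine ⟨K, ?_⟩
    rintro r ⟨z, rfl⟩
    exact hsrad_le_K z (mem_sphere_zero_iff_norm.mp z.2)
  have hsrad_le_Su : ∀ z : En n, ‖z‖ = 1 → srad (tmat A z) ≤ Su := by
    intro z hz
    exact le_ciSup hbdd2 (⟨z, mem_sphere_zero_iff_norm.mpr hz⟩ : sphere (0 : En n) 1)
  have hq1 : ∀ z y : En n, ‖z‖ = 1 → ‖y‖ = 1 → |quadForm (tmat A z) y| ≤ Su := by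
    intro z y hz hy
    exact (hquad_le_srad _ y hy).trans (hsrad_le_Su z hz)
  have hSu0 : 0 ≤ Su := le_trans (abs_nonneg _) (hq1 e e he he)
  have hα' : ((m:ℝ)+1) * Su < α := hα
  have hSu_lt : Su < α := by nlinarith
  have hbound : ∀ u y : En n, |quadForm (tmat A u) y| ≤ Su * ‖u‖^m * ‖y‖^2 :=
    quadForm_tmat_bound A Su hSu0 hq1 e he
  -- properties of g z = tvec A z + α • z
  have hdotg : ∀ z : En n, ‖z‖ = 1 → α - Su ≤ dot z (tvec A z + α • z) := by
    intro z hz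
    rw [dot_add_right, dot_smul_right, dot_tvec_eq_quadForm, dot_self_eq_norm_sq, hz]
    have h1 := hq1 z z hz hz
    have h2 := neg_abs_le (quadForm (tmat A z) z)
    nlinarith
  have hgnorm : ∀ z : En n, ‖z‖ = 1 → α - Su ≤ ‖tvec A z + α • z‖ := by
    intro z hz
    refine (hdotg z hz).trans ?_
    rw [dot_eq_inner]
    calc (inner ℝ z (tvec A z + α • z) : ℝ) ≤ ‖z‖ * ‖tvec A z + α • z‖ := real_inner_le_norm _ _
      _ = ‖tvec A z + α • z‖ := by rw [hz, one_mul]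
  have hgpos : ∀ z : En n, ‖z‖ = 1 → 0 < ‖tvec A z + α • z‖ :=
    fun z hz => lt_of_lt_of_le (by linarith) (hgnorm z hz)
  have hgne : ∀ z : En n, ‖z‖ = 1 → tvec A z + α • z ≠ 0 :=
    fun z hz => norm_pos_iff.mp (hgpos z hz)
  -- all iterates are unit
  have hxu : ∀ k, ‖x k‖ = 1 := by
    intro k
    induction k with
    | zero => exact hx0
    | succ k ih =>
      rw [hiter k, norm_smul, norm_inv, norm_norm,
        inv_mul_cancel₀ (norm_ne_zero_iff.mpr (hgne (x k) ih))]
  -- the increment inequality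
  set c : ℝ := ((m:ℝ)+2) * (α - Su) / 2 with hcdef
  have hc0 : 0 < c := by
    rw [hcdef]
    have h1 : (0:ℝ) < (m:ℝ)+2 := by positivity
    have h2 : 0 < α - Su := by linarith
    positivity
  have hstep : ∀ k, c * ‖x (k+1) - x k‖^2 ≤ tmul A (x (k+1)) - tmul A (x k) := by
    intro k
    have hz : ‖x k‖ = 1 := hxu k
    have hy : ‖x (k+1)‖ = 1 := hxu (k+1)
    set z := x k with hzdef
    set yy := x (k+1) with hyydef
    set G := tvec A z + α • z with hGdef
    have hGnorm : α - Su ≤ ‖G‖ := hgnorm z hz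
    have hGpos : 0 < ‖G‖ := hgpos z hz
    have hyeq : yy = ‖G‖⁻¹ • G := hiter k
    have hdzy : dot z yy = ‖G‖⁻¹ * dot z G := by rw [hyeq, dot_smul_right]
    have hdzG : α - Su ≤ dot z G := hdotg z hz
    have hdzy_pos : 0 < dot z yy := by
      rw [hdzy]
      have h3 : 0 < ‖G‖⁻¹ := inv_pos.mpr hGpos
      nlinarith
    have hyne : yy ≠ -z := by
      intro hcon
      rw [hcon] at hdzy_pos
      have h4 : dot z (-z) = -1 := by
        rw [show -z = (-1 : ℝ) • z from by rw [neg_one_smul], dot_smul_right,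
          dot_self_eq_norm_sq, hz]
        ring
      rw [h4] at hdzy_pos
      linarith
    have hgi := grad_ineq hA Su α hSu0 hbound hα' z yy hz hy hyne
    have hdyG : dot yy G = ‖G‖ := by
      rw [hyeq, dot_comm, dot_smul_right, dot_comm, dot_self_eq_norm_sq]
      field_simp
    have hdzG_eq : dot z G = ‖G‖ * dot z yy := by
      rw [hdzy]
      field_simp
    have hnormsq : ‖yy - z‖^2 = 2 - 2 * dot z yy := by
      rw [← dot_self_eq_norm_sq, dot_sub_left, dot_sub_right, dot_sub_right,
        dot_self_eq_norm_sq, dot_self_eq_norm_sq, hz, hy, dot_comm yy z]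
      ring
    have hkey : dot (yy - z) G = ‖G‖ * ‖yy - z‖^2 / 2 := by
      rw [dot_sub_left, hdyG, hdzG_eq, hnormsq]
      ring
    have hsqnn : 0 ≤ ‖yy - z‖^2 := sq_nonneg _
    have hlow : (α - Su) * ‖yy - z‖^2 / 2 ≤ dot (yy - z) G := by
      rw [hkey]
      nlinarith
    have hm2 : (0:ℝ) ≤ (m:ℝ)+2 := by positivity
    calc c * ‖yy - z‖^2 = ((m:ℝ)+2) * ((α - Su) * ‖yy - z‖^2 / 2) := by
          rw [hcdef]; ring
      _ ≤ ((m:ℝ)+2) * dot (yy - z) G := mul_le_mul_of_nonneg_left hlow hm2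
      _ ≤ tmul A yy - tmul A z := hgi
  -- monotone bounded objective
  set L : ℕ → ℝ := fun k => tmul A (x k) with hLdef
  have hLmono : Monotone L := by
    apply monotone_nat_of_le_succ
    intro k
    have h1 := hstep k
    have h2 : 0 ≤ c * ‖x (k+1) - x k‖^2 := by positivity
    show tmul A (x k) ≤ tmul A (x (k+1))
    linarith
  have hLbdd : BddAbove (Set.range L) := by
    refine ⟨Su, ?_⟩
    rintro r ⟨k, rfl⟩
    have h1 : L k = quadForm (tmat A (x k)) (x k) := tmul_eq_quadForm A (x k)
    have h2 := hq1 (x k) (x k) (hxu k) (hxu k)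
    have h3 := le_abs_self (quadForm (tmat A (x k)) (x k))
    rw [h1]
    linarith
  have hLtend : Tendsto L atTop (𝓝 (⨆ k, L k)) := tendsto_atTop_ciSup hLmono hLbdd
  have hLd : Tendsto (fun k => L (k+1) - L k) atTop (𝓝 0) := by
    have h1 : Tendsto (fun k => L (k+1)) atTop (𝓝 (⨆ k, L k)) :=
      hLtend.comp (tendsto_add_atTop_nat 1)
    have h2 := h1.sub hLtend
    simpa using h2
  have hnorm2 : Tendsto (fun k => ‖x (k+1) - x k‖^2) atTop (𝓝 0) := by
    have hub : ∀ k, ‖x (k+1) - x k‖^2 ≤ (L (k+1) - L k)/c :=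
      fun k => (le_div_iff₀' hc0).mpr (hstep k)
    have hg0 : Tendsto (fun k => (L (k+1) - L k)/c) atTop (𝓝 0) := by
      have := hLd.div_const c
      simpa using this
    exact squeeze_zero (fun k => sq_nonneg _) hub hg0
  have hnorm1 : Tendsto (fun k => ‖x (k+1) - x k‖) atTop (𝓝 0) := by
    have h1 := (Real.continuous_sqrt.tendsto 0).comp hnorm2
    rw [Real.sqrt_zero] at h1
    have h2 : (fun k => Real.sqrt (‖x (k+1) - x k‖^2)) = fun k => ‖x (k+1) - x k‖ :=
      funext fun k => Real.sqrt_sq (norm_nonneg _)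
    rwa [show (Real.sqrt ∘ fun k => ‖x (k+1) - x k‖^2) = fun k => ‖x (k+1) - x k‖ from h2] at h1
  have hdiff0 : Tendsto (fun k => x (k+1) - x k) atTop (𝓝 0) :=
    tendsto_zero_iff_norm_tendsto_zero.mpr hnorm1
  -- continuity of the iteration map
  have hcontg : Continuous (fun z : En n => tvec A z + α • z) :=
    (continuous_tvec A).add (continuous_id.const_smul α)
  -- subsequential limit set
  set C : Set (En n) :=
    {p : En n | ∃ φ : ℕ → ℕ, StrictMono φ ∧ Tendsto (x ∘ φ) atTop (𝓝 p)} with hCdef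
  have hxmem : ∀ k, x k ∈ sphere (0 : En n) 1 :=
    fun k => mem_sphere_zero_iff_norm.mpr (hxu k)
  have hCne : C.Nonempty := by
    obtain ⟨p, _, φ, hφ, hφt⟩ := (isCompact_sphere (0 : En n) 1).tendsto_subseq hxmem
    exact ⟨p, φ, hφ, hφt⟩
  have hCsub : ∀ p ∈ C, ‖p‖ = 1 ∧ ∃ lam : ℝ, tvec A p = lam • p := by
    rintro p ⟨φ, hφ, hφt⟩
    have hp1 : ‖p‖ = 1 := by
      have h1 : Tendsto (fun k => ‖x (φ k)‖) atTop (𝓝 ‖p‖) := hφt.norm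
      have h2 : Tendsto (fun k => ‖x (φ k)‖) atTop (𝓝 1) := by
        have : (fun k => ‖x (φ k)‖) = fun _ => (1:ℝ) := funext fun k => hxu (φ k)
        rw [this]
        exact tendsto_const_nhds
      exact tendsto_nhds_unique h1 h2
    have hgp : tvec A p + α • p ≠ 0 := hgne p hp1
    have hgnp : ‖tvec A p + α • p‖ ≠ 0 := norm_ne_zero_iff.mpr hgp
    -- shifted subsequence also tends to p
    have hshift : Tendsto (fun k => x (φ k + 1)) atTop (𝓝 p) := by
      have h1 : Tendsto (fun k => x (φ k + 1) - x (φ k)) atTop (𝓝 0) :=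
        hdiff0.comp hφ.tendsto_atTop
      have h2 := h1.add hφt
      simpa using h2
    -- continuity gives the fixed point property
    have hcont2 : ContinuousAt
        (fun z : En n => ‖tvec A z + α • z‖⁻¹ • (tvec A z + α • z)) p := by
      refine ContinuousAt.smul (f := fun z : En n => ‖tvec A z + α • z‖⁻¹)
        (g := fun z : En n => tvec A z + α • z) ?_ ?_
      · exact (hcontg.norm.continuousAt).inv₀ hgnp
      · exact hcontg.continuousAt
    have h3 : Tendsto (fun k => ‖tvec A (x (φ k)) + α • (x (φ k))‖⁻¹ •
        (tvec A (x (φ k)) + α • (x (φ k)))) atTop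
        (𝓝 (‖tvec A p + α • p‖⁻¹ • (tvec A p + α • p))) :=
      (hcont2.tendsto).comp hφt
    have h4 : (fun k => ‖tvec A (x (φ k)) + α • (x (φ k))‖⁻¹ •
        (tvec A (x (φ k)) + α • (x (φ k)))) = fun k => x (φ k + 1) :=
      funext fun k => (hiter (φ k)).symm
    rw [h4] at h3
    have hfix : ‖tvec A p + α • p‖⁻¹ • (tvec A p + α • p) = p :=
      tendsto_nhds_unique h3 hshift
    refine ⟨hp1, ‖tvec A p + α • p‖ - α, ?_⟩
    have h5 : tvec A p + α • p = ‖tvec A p + α • p‖ • p := by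
      have h5' := congrArg (fun v : En n => ‖tvec A p + α • p‖ • v) hfix
      rw [smul_smul, mul_inv_cancel₀ hgnp, one_smul] at h5'
      exact h5'
    rw [sub_smul]
    rw [← h5]
    abel
  have hCfin : C.Finite := hfin.subset (fun p hp => hCsub p hp)
  obtain ⟨p₀, hp₀C⟩ := hCne
  -- separation constant δ
  obtain ⟨δ, hδpos, hδ⟩ : ∃ δ : ℝ, 0 < δ ∧ ∀ q ∈ C, q ≠ p₀ → δ ≤ dist p₀ q := by
    by_cases hne : (hCfin.toFinset.erase p₀).Nonempty
    · refine ⟨(hCfin.toFinset.erase p₀).inf' hne (fun q => dist p₀ q), ?_, ?_⟩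
      · rw [Finset.lt_inf'_iff]
        intro q hq
        rw [Finset.mem_erase] at hq
        exact dist_pos.mpr (fun h => hq.1 h.symm)
      · intro q hqC hq
        exact Finset.inf'_le _ (Finset.mem_erase.mpr ⟨hq, hCfin.mem_toFinset.mpr hqC⟩)
    · refine ⟨1, one_pos, fun q hqC hq => absurd ?_ hne⟩
      exact ⟨q, Finset.mem_erase.mpr ⟨hq, hCfin.mem_toFinset.mpr hqC⟩⟩
  -- eventually near the cluster set
  have hE1 : ∀ ε : ℝ, 0 < ε → ∀ᶠ k in atTop, ∃ q ∈ C, dist (x k) q < ε := by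
    intro ε hε
    by_contra hcon
    rw [Filter.not_eventually] at hcon
    have hcon' : ∃ᶠ k in atTop, x k ∈
        (sphere (0 : En n) 1) ∩ {z : En n | ∀ q ∈ C, ε ≤ dist z q} := by
      refine hcon.mono fun k hk => ⟨hxmem k, fun q hq => ?_⟩
      push_neg at hk
      exact hk q hq
    have hclosed : IsClosed {z : En n | ∀ q ∈ C, ε ≤ dist z q} := by
      have : {z : En n | ∀ q ∈ C, ε ≤ dist z q} = ⋂ q ∈ C, {z : En n | ε ≤ dist z q} := by
        ext z; simp
      rw [this]
      exact isClosed_biInter fun q _ =>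
        isClosed_le continuous_const (continuous_id.dist continuous_const)
    have hcomp : IsCompact ((sphere (0 : En n) 1) ∩ {z : En n | ∀ q ∈ C, ε ≤ dist z q}) :=
      (isCompact_sphere (0 : En n) 1).inter_right hclosed
    obtain ⟨a, haD, ψ, hψ, hψt⟩ := hcomp.tendsto_subseq' hcon'
    have haC : a ∈ C := ⟨ψ, hψ, hψt⟩
    have := haD.2 a haC
    rw [dist_self] at this
    linarith
  -- frequently near p₀
  have hfreqp₀ : ∀ ε : ℝ, 0 < ε → ∃ᶠ k in atTop, dist (x k) p₀ < ε := by
    intro ε hε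
    obtain ⟨φ, hφ, hφt⟩ := hp₀C
    rw [Filter.frequently_atTop]
    intro a
    have h1 : ∀ᶠ j in atTop, dist (x (φ j)) p₀ < ε := by
      have := Metric.tendsto_atTop.mp hφt ε hε
      obtain ⟨J, hJ⟩ := this
      rw [Filter.eventually_atTop]
      exact ⟨J, fun j hj => hJ j hj⟩
    rw [Filter.eventually_atTop] at h1
    obtain ⟨J, hJ⟩ := h1
    exact ⟨φ (max a J), le_trans (le_max_left a J) (hφ.le_apply),
      hJ (max a J) (le_max_right a J)⟩
  -- the final convergence
  have htend : Tendsto x atTop (𝓝 p₀) := by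
    rw [Metric.tendsto_atTop]
    intro ε' hε'
    set ε : ℝ := min ε' (δ/3) with hεdef
    have hε : 0 < ε := lt_min hε' (by positivity)
    obtain ⟨N₁, hN₁⟩ := Filter.eventually_atTop.mp (hE1 ε hε)
    have hE2 := Metric.tendsto_atTop.mp hnorm1  -- not right shape; handled below
    obtain ⟨N₂, hN₂⟩ : ∃ N₂, ∀ k ≥ N₂, ‖x (k+1) - x k‖ < ε := by
      have h1 : ∀ᶠ k in atTop, ‖x (k+1) - x k‖ < ε := by
        have := hnorm1.eventually (eventually_lt_nhds hε)
        exact this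
      exact Filter.eventually_atTop.mp h1
    obtain ⟨k₀, hk₀ge, hk₀⟩ := Filter.frequently_atTop.mp (hfreqp₀ ε hε) (max N₁ N₂)
    have hclaim : ∀ j, dist (x (k₀ + j)) p₀ < ε := by
      intro j
      induction j with
      | zero => exact hk₀
      | succ j ih =>
        obtain ⟨q, hqC, hq⟩ := hN₁ (k₀ + j + 1) (by omega)
        have hd : dist (x (k₀ + j + 1)) (x (k₀ + j)) < ε := by
          rw [dist_eq_norm]
          exact hN₂ (k₀ + j) (by omega)
        have htri : dist p₀ q ≤ dist p₀ (x (k₀ + j)) + dist (x (k₀ + j)) (x (k₀ + j + 1))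
            + dist (x (k₀ + j + 1)) q := dist_triangle4 _ _ _ _
        have h3ε : dist p₀ q < δ := by
          have hεδ : ε ≤ δ/3 := min_le_right _ _
          have h1 : dist p₀ (x (k₀ + j)) < ε := by rw [dist_comm]; exact ih
          have h2 : dist (x (k₀ + j)) (x (k₀ + j + 1)) < ε := by rw [dist_comm]; exact hd
          linarith
        have hqp : q = p₀ := by
          by_contra hne
          exact absurd h3ε (not_lt.mpr (hδ q hqC hne))
        rw [← hqp]
        exact hq
    refine ⟨k₀, fun k hk => ?_⟩
    have h1 := hclaim (k - k₀)
    rw [show k₀ + (k - k₀) = k from by omega] at h1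
    exact lt_of_lt_of_le h1 (min_le_left _ _)
  exact ⟨p₀, htend, (hCsub p₀ hp₀C).1, (hCsub p₀ hp₀C).2⟩
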